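/- Let H = H_1 ⊕ H_0 ⊕ H_{−1} be an orthogonal decomposition of a complex Hilbert space and T = (T_1, …, T_n) a commuting row contraction on H whose characteristic function is a polynomial of degree at most m, such that each T_i is block upper triangular with respect to this decomposition (T_i H_1 ⊆ H_1 and T_i (H_1 ⊕ H_0) ⊆ H_1 ⊕ H_0). Assume the compression tuple N'_i := P_{H_0} T_i|_{H_0} satisfies P_{H_0} T^α|_{H_0} = 0 for all α with |α| ≥ m (N' is nilpotent of order at most m), and the compression tuple W'_i := P_{H_{−1}} T_i|_{H_{−1}} satisfies ∑_{i=1}^n W'_i W'_i* = I_{H_{−1}} (W' is a spherical co-isometry). Then M ⊆ H_1 and H_{−1} ⊆ H_c, where M is the closure of the span of {T^α D_{T*} h : h ∈ H, |α| ≥ m} and H_c := {h ∈ H : ∑_{|α|=k} γ_α ‖T^{*α} h‖² = ‖h‖² for all k ∈ ℕ}. -/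

import Mathlib

open scoped InnerProductSpace

set_option maxHeartbeats 1000000
set_option synthInstance.maxHeartbeats 400000

noncomputable section

namespace RowContr

instance {n : ℕ} {H : Type*} [NormedAddCommGroup H] [CompleteSpace H] :
    CompleteSpace (PiLp 2 fun _ : Fin n => H) :=
  inferInstance

/-- Ordered product `T^α = T 0 ^ α 0 ⬝ ⋯ ⬝ T (n-1) ^ α (n-1)`
(for commuting tuples the order is immaterial). -/
def mpow {n : ℕ} {H : Type*} [NormedAddCommGroup H] [InnerProductSpace ℂ H]
    (T : Fin n → H →L[ℂ] H) (α : Fin n → ℕ) : H →L[ℂ] H :=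
  (List.ofFn fun i => (T i) ^ (α i)).prod

/-- The finset of all multi-indices `α : Fin n → ℕ` with `|α| = k`. -/
def multiIdx (n k : ℕ) : Finset (Fin n → ℕ) :=
  (Fintype.piFinset fun _ : Fin n => Finset.range (k + 1)).filter fun α => ∑ i, α i = k

/-- The row operator `E^n → F` associated with a tuple of operators, acting on the
Hilbert direct sum `PiLp 2`. -/
def rowOp {n : ℕ} {E F : Type*} [NormedAddCommGroup E] [InnerProductSpace ℂ E]
    [NormedAddCommGroup F] [InnerProductSpace ℂ F]
    (T : Fin n → E →L[ℂ] F) : PiLp 2 (fun _ : Fin n => E) →L[ℂ] F :=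
  ∑ i, (T i).comp (PiLp.proj 2 (fun _ : Fin n => E) i)

/-- The `α`-th Taylor coefficient of the characteristic function of `T`, where `Dstar`
plays the role of the defect operator `D_{T*}` and `D` the role of `D_T`:
`θ_{T,α} = ∑_{j : α_j ≥ 1} γ_{α-e_j} • D_{T*} T^{*(α-e_j)} P_j D_T`. -/
def charCoeff {n : ℕ} {H : Type*} [NormedAddCommGroup H] [InnerProductSpace ℂ H]
    [CompleteSpace H] (T : Fin n → H →L[ℂ] H) (Dstar : H →L[ℂ] H)
    (D : PiLp 2 (fun _ : Fin n => H) →L[ℂ] PiLp 2 (fun _ : Fin n => H))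
    (α : Fin n → ℕ) : PiLp 2 (fun _ : Fin n => H) →L[ℂ] H :=
  ∑ j ∈ Finset.univ.filter (fun j => 0 < α j),
    (Nat.multinomial Finset.univ (α - Pi.single j 1) : ℂ) •
      (Dstar ∘L (star (mpow T (α - Pi.single j 1))) ∘L (PiLp.proj 2 (fun _ : Fin n => H) j) ∘L D)

/-- The closure of the span of `{T^α D_{T*} h : h ∈ H, |α| ≥ m}`. -/
def rangeSpanGE {n : ℕ} {H : Type*} [NormedAddCommGroup H] [InnerProductSpace ℂ H]
    (T : Fin n → H →L[ℂ] H) (Dstar : H →L[ℂ] H) (m : ℕ) : Submodule ℂ H :=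
  (Submodule.span ℂ
    {x : H | ∃ (α : Fin n → ℕ) (h : H), m ≤ ∑ i, α i ∧ x = mpow T α (Dstar h)}).topologicalClosure

/-- The closure of the span of `{T^α D_{T*} h : h ∈ H, |α| = m}`. -/
def rangeSpanEQ {n : ℕ} {H : Type*} [NormedAddCommGroup H] [InnerProductSpace ℂ H]
    (T : Fin n → H →L[ℂ] H) (Dstar : H →L[ℂ] H) (m : ℕ) : Submodule ℂ H :=
  (Submodule.span ℂ
    {x : H | ∃ (α : Fin n → ℕ) (h : H), ∑ i, α i = m ∧ x = mpow T α (Dstar h)}).topologicalClosure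

/-- The closure of the span of `{T^α D_{T*} h : h ∈ H, α ∈ ℕ^n}`. -/
def rangeSpanAll {n : ℕ} {H : Type*} [NormedAddCommGroup H] [InnerProductSpace ℂ H]
    (T : Fin n → H →L[ℂ] H) (Dstar : H →L[ℂ] H) : Submodule ℂ H :=
  (Submodule.span ℂ
    {x : H | ∃ (α : Fin n → ℕ) (h : H), x = mpow T α (Dstar h)}).topologicalClosure

/-- The set `H_c = {h ∈ H : ∑_{|α| = k} γ_α ‖T^{*α} h‖² = ‖h‖² for all k ∈ ℕ}`. -/
def Hc {n : ℕ} {H : Type*} [NormedAddCommGroup H] [InnerProductSpace ℂ H] [CompleteSpace H]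
    (T : Fin n → H →L[ℂ] H) : Set H :=
  {h : H | ∀ k : ℕ, ∑ α ∈ multiIdx n k,
    (Nat.multinomial Finset.univ α : ℝ) * ‖star (mpow T α) h‖ ^ 2 = ‖h‖ ^ 2}

section Aux

variable {n : ℕ} {H : Type*} [NormedAddCommGroup H] [InnerProductSpace ℂ H]

lemma mpow_cons (T : Fin (n+1) → H →L[ℂ] H) (α : Fin (n+1) → ℕ) :
    mpow T α = T 0 ^ α 0 * mpow (fun i => T i.succ) (fun i => α i.succ) := by
  simp [mpow, List.ofFn_succ]

lemma mpow_zero (T : Fin n → H →L[ℂ] H) : mpow T (fun _ => 0) = 1 := by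
  induction n with
  | zero => simp [mpow]
  | succ n ih => rw [mpow_cons]; simp [ih]

lemma commute_mpow (T : Fin n → H →L[ℂ] H) (B : H →L[ℂ] H)
    (hB : ∀ i, Commute B (T i)) (α : Fin n → ℕ) : Commute B (mpow T α) := by
  apply Commute.list_prod_right
  intro x hx
  obtain ⟨i, rfl⟩ := List.mem_ofFn.mp hx
  exact (hB i).pow_right _

lemma mpow_add (T : Fin n → H →L[ℂ] H) (hcomm : ∀ i j, Commute (T i) (T j))
    (α β : Fin n → ℕ) : mpow T (α + β) = mpow T α * mpow T β := by
  induction n with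
  | zero => simp [mpow]
  | succ n ih =>
    rw [mpow_cons, mpow_cons T α, mpow_cons T β]
    have htail : ∀ i j : Fin n, Commute (T i.succ) (T j.succ) := fun i j => hcomm _ _
    have h1 : (fun i : Fin n => (α + β) i.succ)
        = (fun i => α i.succ) + (fun i => β i.succ) := rfl
    have h2 : (α + β) 0 = α 0 + β 0 := rfl
    rw [h1, h2, ih _ htail, pow_add]
    have hc : Commute (T 0 ^ β 0) (mpow (fun i : Fin n => T i.succ) (fun i => α i.succ)) :=
      (commute_mpow _ _ (fun i => hcomm 0 i.succ) _).pow_left _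
    rw [mul_assoc, mul_assoc, ← mul_assoc (T 0 ^ β 0), hc.eq, mul_assoc]

lemma mpow_single (T : Fin n → H →L[ℂ] H) (i : Fin n) :
    mpow T (Pi.single i 1) = T i := by
  induction n with
  | zero => exact i.elim0
  | succ n ih =>
    rw [mpow_cons]
    induction i using Fin.cases with
    | zero =>
      have ht : (fun j : Fin n => (Pi.single (0 : Fin (n+1)) 1 : Fin (n+1) → ℕ) j.succ)
          = fun _ => 0 := by
        funext j; exact Pi.single_eq_of_ne (Fin.succ_ne_zero j) 1
      rw [ht, mpow_zero, Pi.single_eq_same]; simp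
    | succ i' =>
      have ht : (fun j : Fin n => (Pi.single (i'.succ : Fin (n+1)) 1 : Fin (n+1) → ℕ) j.succ)
          = (Pi.single i' 1 : Fin n → ℕ) := by
        funext j
        rcases eq_or_ne j i' with rfl | hne
        · simp
        · rw [Pi.single_eq_of_ne hne 1, Pi.single_eq_of_ne (fun h => hne (Fin.succ_injective _ h)) 1]
      rw [ht, ih (fun j => T j.succ) i',
        Pi.single_eq_of_ne (Ne.symm (Fin.succ_ne_zero i'))]
      simp

end Aux

section Comb

lemma mem_multiIdx {n k : ℕ} {α : Fin n → ℕ} :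
    α ∈ multiIdx n k ↔ ∑ i, α i = k := by
  constructor
  · intro h; exact (Finset.mem_filter.mp h).2
  · intro h
    refine Finset.mem_filter.mpr ⟨Fintype.mem_piFinset.mpr fun i => ?_, h⟩
    refine Finset.mem_range.mpr (Nat.lt_succ_of_le ?_)
    calc α i ≤ ∑ j, α j := Finset.single_le_sum (fun j _ => Nat.zero_le _) (Finset.mem_univ i)
    _ = k := h

lemma multiIdx_zero {n : ℕ} : multiIdx n 0 = {fun _ => 0} := by
  ext α
  rw [mem_multiIdx, Finset.mem_singleton]
  constructor
  · intro h; funext i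
    exact Nat.eq_zero_of_le_zero (h ▸ Finset.single_le_sum
      (fun j _ => Nat.zero_le _) (Finset.mem_univ i))
  · rintro rfl; simp

lemma sum_sub_single {n : ℕ} (α : Fin n → ℕ) (i : Fin n) (hi : 0 < α i) :
    ∑ j, (α - (Pi.single i 1 : Fin n → ℕ)) j = (∑ j, α j) - 1 := by
  have h : (α - (Pi.single i 1 : Fin n → ℕ)) + (Pi.single i 1 : Fin n → ℕ) = α := by
    funext j
    rcases eq_or_ne j i with rfl | hne
    · simp [Pi.sub_apply]; omega
    · simp [Pi.sub_apply, Pi.single_eq_of_ne hne]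
  have h2 : ∑ j, ((α - (Pi.single i 1 : Fin n → ℕ)) + (Pi.single i 1 : Fin n → ℕ)) j
      = (∑ j, (α - (Pi.single i 1 : Fin n → ℕ)) j) + 1 := by
    simp only [Pi.add_apply]
    rw [Finset.sum_add_distrib]
    simp [Finset.sum_pi_single']
  have h3 := congrArg (fun f => ∑ j, f j) h
  simp only [h2] at h3
  have h4 : 1 ≤ ∑ j, α j := le_trans hi
    (Finset.single_le_sum (fun j _ => Nat.zero_le _) (Finset.mem_univ i))
  omega

lemma multinomial_rec {n k : ℕ} (α : Fin n → ℕ) (hk : ∑ i, α i = k + 1) :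
    (Nat.multinomial Finset.univ α)
      = ∑ i ∈ Finset.univ.filter (fun i => 0 < α i),
          Nat.multinomial Finset.univ (α - (Pi.single i 1 : Fin n → ℕ)) := by
  have hprodpos : 0 < ∏ j, (α j).factorial :=
    Finset.prod_pos fun j _ => Nat.factorial_pos _
  apply Nat.eq_of_mul_eq_mul_left hprodpos
  rw [Nat.multinomial_spec, hk, Finset.mul_sum]
  have hterm : ∀ i ∈ Finset.univ.filter (fun i => 0 < (α i)), (∏ j, (α j).factorial) *
      Nat.multinomial Finset.univ (α - (Pi.single i 1 : Fin n → ℕ)) = α i * Nat.factorial k := by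
    intro i hi
    have hipos : 0 < α i := (Finset.mem_filter.mp hi).2
    have hprod : ∏ j, (α j).factorial
        = α i * ∏ j, ((α - (Pi.single i 1 : Fin n → ℕ)) j).factorial := by
      rw [← Finset.prod_compl_mul_prod {i} (f := fun j => (α j).factorial),
          ← Finset.prod_compl_mul_prod {i}
            (f := fun j => ((α - (Pi.single i 1 : Fin n → ℕ)) j).factorial)]
      have hoff : ∏ j ∈ ({i} : Finset (Fin n))ᶜ, (α j).factorial
          = ∏ j ∈ ({i} : Finset (Fin n))ᶜ, ((α - (Pi.single i 1 : Fin n → ℕ)) j).factorial := by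
        apply Finset.prod_congr rfl
        intro j hj
        have hne : j ≠ i := by simpa using hj
        simp [Pi.sub_apply, Pi.single_eq_of_ne hne]
      rw [hoff]
      have hii : ((α - (Pi.single i 1 : Fin n → ℕ)) i) = α i - 1 := by simp [Pi.sub_apply]
      rw [Finset.prod_singleton, Finset.prod_singleton, hii]
      have : (α i).factorial = α i * (α i - 1).factorial := by
        obtain ⟨m, hm⟩ := Nat.exists_eq_succ_of_ne_zero (Nat.pos_iff_ne_zero.mp hipos)
        rw [hm, Nat.factorial_succ]
        simp
      rw [this]; ring
    rw [hprod, mul_assoc, Nat.multinomial_spec,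
      sum_sub_single α i hipos, hk]
    simp
  rw [Finset.sum_congr rfl hterm, ← Finset.sum_mul]
  have hsum : ∑ i ∈ Finset.univ.filter (fun i => 0 < α i), α i = k + 1 := by
    rw [← hk]
    apply Finset.sum_subset (Finset.filter_subset _ _)
    intro x _ hx
    simp only [Finset.mem_filter, Finset.mem_univ, true_and] at hx
    omega
  rw [hsum, Nat.factorial_succ]

lemma reindex {n k : ℕ} (g : (Fin n → ℕ) → Fin n → ℝ) :
    ∑ α ∈ multiIdx n (k+1), ∑ i ∈ Finset.univ.filter (fun i => 0 < α i),
        g (α - (Pi.single i 1 : Fin n → ℕ)) i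
      = ∑ i : Fin n, ∑ β ∈ multiIdx n k, g β i := by
  rw [Finset.sum_sigma', Finset.sum_sigma']
  refine Finset.sum_nbij' (fun p => ⟨p.2, p.1 - (Pi.single p.2 1 : Fin n → ℕ)⟩)
    (fun p => ⟨p.2 + (Pi.single p.1 1 : Fin n → ℕ), p.1⟩) ?_ ?_ ?_ ?_ ?_
  · rintro ⟨α, i⟩ hp
    simp only [Finset.mem_sigma] at hp ⊢
    obtain ⟨h1, h2⟩ := hp
    have hipos : 0 < α i := by simpa using h2
    refine ⟨Finset.mem_univ _, mem_multiIdx.mpr ?_⟩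
    rw [sum_sub_single α i hipos, mem_multiIdx.mp h1]
    omega
  · rintro ⟨i, β⟩ hp
    simp only [Finset.mem_sigma] at hp ⊢
    obtain ⟨_, h2⟩ := hp
    constructor
    · refine mem_multiIdx.mpr ?_
      simp only [Pi.add_apply]
      rw [Finset.sum_add_distrib, mem_multiIdx.mp h2]
      simp [Finset.sum_pi_single']
    · simp [Pi.add_apply]
  · rintro ⟨α, i⟩ hp
    simp only [Finset.mem_sigma] at hp
    have hipos : 0 < α i := by simpa using hp.2
    have : (α - (Pi.single i 1 : Fin n → ℕ)) + (Pi.single i 1 : Fin n → ℕ) = α := by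
      funext j
      rcases eq_or_ne j i with rfl | hne
      · simp [Pi.sub_apply]; omega
      · simp [Pi.sub_apply, Pi.single_eq_of_ne hne]
    simp [this]
  · rintro ⟨i, β⟩ _
    have : (β + (Pi.single i 1 : Fin n → ℕ)) - (Pi.single i 1 : Fin n → ℕ) = β := by
      funext j
      rcases eq_or_ne j i with rfl | hne
      · simp [Pi.sub_apply]
      · simp [Pi.sub_apply, Pi.single_eq_of_ne hne]
    simp [this]
  · rintro ⟨α, i⟩ _
    rfl

end Comb

section Key

variable {n : ℕ} {H : Type*} [NormedAddCommGroup H] [InnerProductSpace ℂ H] [CompleteSpace H]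

lemma star_mpow (T : Fin n → H →L[ℂ] H) (hcomm : ∀ i j, Commute (T i) (T j))
    (α : Fin n → ℕ) :
    star (mpow T α) = mpow (fun i => star (T i)) α := by
  induction n with
  | zero =>
    have h1 : mpow T α = 1 := by
      have : α = fun _ => 0 := funext fun i => i.elim0
      rw [this, mpow_zero]
    have h2 : mpow (fun i => star (T i)) α = 1 := by
      have : α = fun _ => 0 := funext fun i => i.elim0
      rw [this, mpow_zero]
    rw [h1, h2, star_one]
  | succ n ih =>
    rw [mpow_cons, star_mul, star_pow,
      ih (fun i => T i.succ) (fun i j => hcomm _ _), mpow_cons]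
    have hc : Commute ((star (T 0)) ^ α 0)
        (mpow (fun i : Fin n => star (T i.succ)) (fun i => α i.succ)) :=
      (commute_mpow _ _ (fun i => (hcomm 0 i.succ).star_star) _).pow_left _
    exact hc.symm.eq

omit [CompleteSpace H] in
lemma pow_mem (B : H →L[ℂ] H) (S : Submodule ℂ H) (hB : ∀ x ∈ S, B x ∈ S)
    (k : ℕ) : ∀ x ∈ S, (B ^ k) x ∈ S := by
  induction k with
  | zero => intro x hx; simpa using hx
  | succ k ih =>
    intro x hx
    rw [pow_succ, ContinuousLinearMap.mul_apply]
    exact ih _ (hB x hx)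

omit [CompleteSpace H] in
lemma mpow_mem (T : Fin n → H →L[ℂ] H) (S : Submodule ℂ H)
    (hS : ∀ i, ∀ x ∈ S, T i x ∈ S) (α : Fin n → ℕ) :
    ∀ x ∈ S, mpow T α x ∈ S := by
  induction n with
  | zero =>
    intro x hx
    have : α = fun _ => 0 := funext fun i => i.elim0
    rw [this, mpow_zero]; simpa using hx
  | succ n ih =>
    intro x hx
    rw [mpow_cons, ContinuousLinearMap.mul_apply]
    exact pow_mem _ _ (hS 0) _ _ (ih (fun i => T i.succ) (fun i => hS i.succ) _ x hx)

lemma key_sum (A : Fin n → H →L[ℂ] H) (hA : ∀ i j, Commute (A i) (A j))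
    (S : Submodule ℂ H) (hinv : ∀ i, ∀ v ∈ S, A i v ∈ S)
    (hiso : ∀ v ∈ S, ∑ i, ‖A i v‖ ^ 2 = ‖v‖ ^ 2) (k : ℕ) :
    ∀ v ∈ S, ∑ α ∈ multiIdx n k,
      (Nat.multinomial Finset.univ α : ℝ) * ‖mpow A α v‖ ^ 2 = ‖v‖ ^ 2 := by
  induction k with
  | zero =>
    intro v hv
    rw [multiIdx_zero, Finset.sum_singleton, mpow_zero]
    have : Nat.multinomial Finset.univ (fun _ : Fin n => 0) = 1 := by
      simp [Nat.multinomial]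
    rw [this]
    simp
  | succ k ih =>
    intro v hv
    have step1 : ∑ α ∈ multiIdx n (k+1),
        (Nat.multinomial Finset.univ α : ℝ) * ‖mpow A α v‖ ^ 2
        = ∑ α ∈ multiIdx n (k+1), ∑ i ∈ Finset.univ.filter (fun i => 0 < α i),
            (Nat.multinomial Finset.univ (α - Pi.single i 1) : ℝ)
              * ‖mpow A ((α - Pi.single i 1) + Pi.single i 1) v‖ ^ 2 := by
      apply Finset.sum_congr rfl
      intro α hα
      rw [multinomial_rec α (mem_multiIdx.mp hα)]
      push_cast
      rw [Finset.sum_mul]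
      apply Finset.sum_congr rfl
      intro i hi
      have hipos : 0 < α i := by simpa using hi
      have hrec : (α - Pi.single i 1) + Pi.single i 1 = α := by
        funext j
        rcases eq_or_ne j i with rfl | hne
        · simp [Pi.sub_apply]; omega
        · simp [Pi.sub_apply, Pi.single_eq_of_ne hne]
      rw [hrec]
    have hre := reindex (k := k) (fun (β : Fin n → ℕ) (i : Fin n) =>
      (Nat.multinomial Finset.univ β : ℝ) * ‖mpow A (β + Pi.single i 1) v‖ ^ 2)
    rw [step1]
    rw [hre]
    have step2 : ∀ i : Fin n, ∑ β ∈ multiIdx n k,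
        (Nat.multinomial Finset.univ β : ℝ) * ‖mpow A (β + Pi.single i 1) v‖ ^ 2
        = ‖A i v‖ ^ 2 := by
      intro i
      have heq : ∀ β : Fin n → ℕ, mpow A (β + Pi.single i 1) v = mpow A β (A i v) := by
        intro β
        rw [mpow_add A hA, mpow_single, ContinuousLinearMap.mul_apply]
      calc ∑ β ∈ multiIdx n k,
          (Nat.multinomial Finset.univ β : ℝ) * ‖mpow A (β + Pi.single i 1) v‖ ^ 2
          = ∑ β ∈ multiIdx n k,
            (Nat.multinomial Finset.univ β : ℝ) * ‖mpow A β (A i v)‖ ^ 2 := by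
            apply Finset.sum_congr rfl; intro β _; rw [heq]
        _ = ‖A i v‖ ^ 2 := ih (A i v) (hinv i v hv)
    calc ∑ i : Fin n, ∑ β ∈ multiIdx n k,
        (Nat.multinomial Finset.univ β : ℝ) * ‖mpow A (β + Pi.single i 1) v‖ ^ 2
        = ∑ i : Fin n, ‖A i v‖ ^ 2 := Finset.sum_congr rfl fun i _ => step2 i
      _ = ‖v‖ ^ 2 := hiso v hv

end Key

theorem statement_14 {n : ℕ} {H : Type*} [NormedAddCommGroup H] [InnerProductSpace ℂ H]
    [CompleteSpace H]
    (T : Fin n → H →L[ℂ] H) (m : ℕ)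
    (hcomm : ∀ i j, Commute (T i) (T j))
    (hrow : ((1 : H →L[ℂ] H) - ∑ i, T i ∘L star (T i)).IsPositive)
    (Dstar : H →L[ℂ] H) (hD1 : Dstar.IsPositive)
    (hD2 : Dstar ∘L Dstar = 1 - ∑ i, T i ∘L star (T i))
    (D : PiLp 2 (fun _ : Fin n => H) →L[ℂ] PiLp 2 (fun _ : Fin n => H))
    (hDT1 : D.IsPositive)
    (hDT2 : D ∘L D = 1 - (ContinuousLinearMap.adjoint (rowOp T)) ∘L rowOp T)
    (hpoly : ∀ β : Fin n → ℕ, m < ∑ i, β i → charCoeff T Dstar D β = 0)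
    (H1 H0 Hm1 : Submodule ℂ H)
    (hH1 : IsClosed (H1 : Set H)) (hH0 : IsClosed (H0 : Set H))
    (hHm1 : IsClosed (Hm1 : Set H))
    (ho10 : ∀ x ∈ H1, ∀ y ∈ H0, ⟪x, y⟫_ℂ = 0)
    (ho1m : ∀ x ∈ H1, ∀ y ∈ Hm1, ⟪x, y⟫_ℂ = 0)
    (ho0m : ∀ x ∈ H0, ∀ y ∈ Hm1, ⟪x, y⟫_ℂ = 0)
    (hsup : H1 ⊔ H0 ⊔ Hm1 = ⊤)
    (htri1 : ∀ i : Fin n, ∀ x ∈ H1, T i x ∈ H1)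
    (htri10 : ∀ i : Fin n, ∀ x ∈ H1 ⊔ H0, T i x ∈ H1 ⊔ H0)
    (Pm1 : H →L[ℂ] H)
    (hPm1 : ∀ h : H, Pm1 h ∈ Hm1 ∧ h - Pm1 h ∈ Hm1ᗮ)
    (hW : ∀ x ∈ Hm1, ∑ i, Pm1 (T i (Pm1 (star (T i) x))) = x)
    (P0 : H →L[ℂ] H)
    (hP0 : ∀ h : H, P0 h ∈ H0 ∧ h - P0 h ∈ H0ᗮ)
    (hnil : ∀ α : Fin n → ℕ, m ≤ ∑ i, α i → ∀ x ∈ H0, P0 (mpow T α x) = 0) :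
    rangeSpanGE T Dstar m ≤ H1 ∧ (Hm1 : Set H) ⊆ Hc T := by
  have hadj : ContinuousLinearMap.adjoint Dstar = Dstar := by
    rw [← ContinuousLinearMap.star_eq_adjoint]; exact hD1.isSelfAdjoint
  -- orthogonality of `H1 ⊔ H0` against `Hm1`
  have K_orthm : ∀ u ∈ H1 ⊔ H0, ∀ v ∈ Hm1, ⟪u, v⟫_ℂ = 0 := by
    intro u hu v hv
    obtain ⟨a, ha, b, hb, rfl⟩ := Submodule.mem_sup.mp hu
    rw [inner_add_left, ho1m a ha v hv, ho0m b hb v hv, add_zero]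
  -- elements orthogonal to `Hm1` lie in `H1 ⊔ H0`
  have horthK : ∀ z : H, (∀ v ∈ Hm1, ⟪v, z⟫_ℂ = 0) → z ∈ H1 ⊔ H0 := by
    intro z hz
    have hztop : z ∈ H1 ⊔ H0 ⊔ Hm1 := hsup ▸ Submodule.mem_top
    obtain ⟨c, hc, v, hv, rfl⟩ := Submodule.mem_sup.mp hztop
    have h1 : ⟪v, c + v⟫_ℂ = 0 := hz v hv
    have h2 : ⟪v, c⟫_ℂ = 0 := by
      rw [← inner_conj_symm, K_orthm c hc v hv, map_zero]
    rw [inner_add_right, h2, zero_add] at h1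
    rw [inner_self_eq_zero.mp h1, add_zero] at *
    exact hc
  -- elements orthogonal to `H1 ⊔ H0` lie in `Hm1`
  have horthM : ∀ z : H, (∀ u ∈ H1 ⊔ H0, ⟪u, z⟫_ℂ = 0) → z ∈ Hm1 := by
    intro z hz
    have hztop : z ∈ H1 ⊔ H0 ⊔ Hm1 := hsup ▸ Submodule.mem_top
    obtain ⟨c, hc, v, hv, rfl⟩ := Submodule.mem_sup.mp hztop
    have h1 : ⟪c, c + v⟫_ℂ = 0 := hz c hc
    rw [inner_add_right, K_orthm c hc v hv, add_zero] at h1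
    rw [inner_self_eq_zero.mp h1, zero_add]
    exact hv
  -- `Hm1` is invariant under the adjoints
  have hTstar : ∀ i : Fin n, ∀ v ∈ Hm1, star (T i) v ∈ Hm1 := by
    intro i v hv
    apply horthM
    intro u hu
    rw [ContinuousLinearMap.star_eq_adjoint, ContinuousLinearMap.adjoint_inner_right]
    exact K_orthm _ (htri10 i u hu) v hv
  -- the projection fixes `Hm1`
  have hPm1fix : ∀ v ∈ Hm1, Pm1 v = v := by
    intro v hv
    have h1 : v - Pm1 v ∈ Hm1 := Submodule.sub_mem _ hv (hPm1 v).1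
    have h2 : ⟪v - Pm1 v, v - Pm1 v⟫_ℂ = 0 :=
      (Submodule.mem_orthogonal _ _).mp (hPm1 v).2 _ h1
    have := inner_self_eq_zero.mp h2
    rw [sub_eq_zero] at this
    exact this.symm
  have hPm1inner : ∀ v ∈ Hm1, ∀ z : H, ⟪v, Pm1 z⟫_ℂ = ⟪v, z⟫_ℂ := by
    intro v hv z
    have h1 : ⟪v, z - Pm1 z⟫_ℂ = 0 :=
      (Submodule.mem_orthogonal _ _).mp (hPm1 z).2 v hv
    rw [inner_sub_right, sub_eq_zero] at h1
    exact h1.symm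
  -- the co-isometry identity on `Hm1`
  have hcoiso : ∀ v ∈ Hm1, ∑ i, ⟪star (T i) v, star (T i) v⟫_ℂ = ⟪v, v⟫_ℂ := by
    intro v hv
    have hvv : ⟪v, v⟫_ℂ = ⟪v, ∑ i, Pm1 (T i (Pm1 (star (T i) v)))⟫_ℂ := by
      rw [hW v hv]
    rw [hvv, inner_sum]
    apply Finset.sum_congr rfl
    intro i _
    rw [hPm1inner v hv, hPm1fix _ (hTstar i v hv)]
    rw [← ContinuousLinearMap.adjoint_inner_left (T i) (star (T i) v) v]
    rw [← ContinuousLinearMap.star_eq_adjoint]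
  -- the defect operator kills `Hm1`
  have hDm1 : ∀ v ∈ Hm1, Dstar v = 0 := by
    intro v hv
    have h1 : ⟪Dstar v, Dstar v⟫_ℂ = ⟪v, (Dstar ∘L Dstar) v⟫_ℂ := by
      rw [ContinuousLinearMap.comp_apply]
      rw [← ContinuousLinearMap.adjoint_inner_left Dstar (Dstar v) v, hadj]
    rw [hD2] at h1
    have h2 : ((1 : H →L[ℂ] H) - ∑ i, T i ∘L star (T i)) v
        = v - ∑ i, T i (star (T i) v) := by
      simp [ContinuousLinearMap.sub_apply, ContinuousLinearMap.sum_apply]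
    rw [h2, inner_sub_right, inner_sum] at h1
    have h3 : ∀ i : Fin n, ⟪v, T i (star (T i) v)⟫_ℂ = ⟪star (T i) v, star (T i) v⟫_ℂ := by
      intro i
      rw [← ContinuousLinearMap.adjoint_inner_left (T i) (star (T i) v) v,
        ← ContinuousLinearMap.star_eq_adjoint]
    rw [Finset.sum_congr rfl fun i _ => h3 i, hcoiso v hv, sub_self] at h1
    exact inner_self_eq_zero.mp h1
  -- the range of the defect operator is inside `H1 ⊔ H0`
  have hDrange : ∀ h : H, Dstar h ∈ H1 ⊔ H0 := by
    intro h
    apply horthK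
    intro v hv
    rw [← hadj, ContinuousLinearMap.adjoint_inner_right, hDm1 v hv, inner_zero_left]
  -- `P0` kills `H1`
  have hP0H1 : ∀ c ∈ H1, P0 c = 0 := by
    intro c hc
    have h1 : ⟪P0 c, c - P0 c⟫_ℂ = 0 :=
      (Submodule.mem_orthogonal _ _).mp (hP0 c).2 _ (hP0 c).1
    have h2 : ⟪P0 c, c⟫_ℂ = 0 := by
      rw [← inner_conj_symm, ho10 c hc _ (hP0 c).1, map_zero]
    rw [inner_sub_right, h2, zero_sub, neg_eq_zero] at h1
    exact inner_self_eq_zero.mp h1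
  -- `P0` fixes `H0`
  have hP0fix : ∀ d ∈ H0, P0 d = d := by
    intro d hd
    have h1 : d - P0 d ∈ H0 := Submodule.sub_mem _ hd (hP0 d).1
    have h2 : ⟪d - P0 d, d - P0 d⟫_ℂ = 0 :=
      (Submodule.mem_orthogonal _ _).mp (hP0 d).2 _ h1
    have := inner_self_eq_zero.mp h2
    rw [sub_eq_zero] at this
    exact this.symm
  -- main membership claim for part 1
  have hmain1 : ∀ (α : Fin n → ℕ) (h : H), m ≤ ∑ i, α i → mpow T α (Dstar h) ∈ H1 := by
    intro α h hle
    obtain ⟨a, ha, b, hb, hab⟩ := Submodule.mem_sup.mp (hDrange h)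
    have hx : mpow T α (Dstar h) = mpow T α a + mpow T α b := by
      rw [← hab, map_add]
    have hxa : mpow T α a ∈ H1 := mpow_mem T H1 htri1 α a ha
    have hxb10 : mpow T α b ∈ H1 ⊔ H0 :=
      mpow_mem T (H1 ⊔ H0) htri10 α b (Submodule.mem_sup_right hb)
    obtain ⟨c, hc, d, hd, hcd⟩ := Submodule.mem_sup.mp hxb10
    have hP0xb : P0 (mpow T α b) = 0 := hnil α hle b hb
    have hd0 : d = 0 := by
      have : P0 (mpow T α b) = P0 c + P0 d := by rw [← hcd, map_add]
      rw [hP0xb, hP0H1 c hc, hP0fix d hd, zero_add] at this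
      exact this.symm
    have hxb : mpow T α b ∈ H1 := by
      rw [← hcd, hd0, add_zero]; exact hc
    rw [hx]
    exact Submodule.add_mem _ hxa hxb
  constructor
  · -- part 1
    apply Submodule.topologicalClosure_minimal
    · apply Submodule.span_le.mpr
      rintro x ⟨α, h, hle, rfl⟩
      exact hmain1 α h hle
    · exact hH1
  · -- part 2
    intro h hh
    have hhm : h ∈ Hm1 := hh
    intro k
    have hA : ∀ i j, Commute (star (T i)) (star (T j)) := fun i j =>
      (hcomm i j).star_star
    have hiso : ∀ v ∈ Hm1, ∑ i, ‖star (T i) v‖ ^ 2 = ‖v‖ ^ 2 := by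
      intro v hv
      have := hcoiso v hv
      simp only [inner_self_eq_norm_sq_to_K] at this
      exact_mod_cast this
    have hkey := key_sum (fun i => star (T i)) hA Hm1 hTstar hiso k h hhm
    calc ∑ α ∈ multiIdx n k,
        (Nat.multinomial Finset.univ α : ℝ) * ‖star (mpow T α) h‖ ^ 2
        = ∑ α ∈ multiIdx n k,
          (Nat.multinomial Finset.univ α : ℝ) * ‖mpow (fun i => star (T i)) α h‖ ^ 2 := by
          apply Finset.sum_congr rfl
          intro α _
          rw [star_mpow T hcomm α]
      _ = ‖h‖ ^ 2 := hkey

end RowContr
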